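/- arXiv:1109.2879 — 2 statements merged into one kernel-verified Lean document; each statement's English description precedes it below -/
import Mathlib

section
/- Let L be an even unimodular lattice, S ⊆ L a primitive nondegenerate sublattice, and S^⊥ = {x ∈ L : B(x, S) = 0} its orthogonal complement in L. An isometry φ of S can be extended to an isometry of L which restricts to the identity on S^⊥ if and only if φ induces the identity on the discriminant group A_S = S*/S. -/
/-!
STATEMENT 13 (Nikulin, Proposition 1.5.1: extending an isometry of a primitive
sublattice by the identity on its orthogonal complement).

The ambient even unimodular lattice `L` is formalized by its Gram matrix
`H : Matrix (Fin m) (Fin m) ℤ` with bilinear form `bilin H x y = x ⬝ᵥ H.mulVec y`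
on `L = (Fin m → ℤ)`; a sublattice is a submodule `S ⊆ L`, and `S ⊗ ℚ` is realized as
the `ℚ`-span of `S` inside `Fin m → ℚ`.  The dual lattice `S*` consists of the vectors
of `S ⊗ ℚ` pairing integrally with all elements of `S`.  For `x ∈ S ⊗ ℚ` pick `d ≠ 0`
and `s ∈ S` with `d • x = s`; then the `ℚ`-linear extension of an isometry `φ` of `S`
sends `x` to `d⁻¹ • φ(s)`, and `φ` induces the identity on `A_S = S*/S` iff for every
such `x ∈ S*` the vector `d⁻¹ • φ(s)` again lies in `S*` and differs from `x` by an
element of `S`.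
-/

open Matrix

/-- The bilinear form of the lattice with Gram matrix `H`. -/
def bilin {m : ℕ} (H : Matrix (Fin m) (Fin m) ℤ) (x y : Fin m → ℤ) : ℤ :=
  x ⬝ᵥ H.mulVec y

/-- The `ℚ`-bilinear extension of the form of `H` to `L ⊗ ℚ = (Fin m → ℚ)`. -/
def bilinQ {m : ℕ} (H : Matrix (Fin m) (Fin m) ℤ) (x y : Fin m → ℚ) : ℚ :=
  x ⬝ᵥ (H.map (Int.cast : ℤ → ℚ)).mulVec y

/-- The canonical inclusion `L = ℤᵐ ⊆ L ⊗ ℚ = ℚᵐ`. -/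
def castVec {m : ℕ} (v : Fin m → ℤ) : Fin m → ℚ :=
  fun i => (v i : ℚ)

/-- The lattice is even. -/
def IsEvenLattice {m : ℕ} (H : Matrix (Fin m) (Fin m) ℤ) : Prop :=
  ∀ x : Fin m → ℤ, Even (bilin H x x)

/-- The lattice is unimodular: `x ↦ B(x,·)` is an isomorphism onto `Hom(L,ℤ)`,
equivalently the Gram matrix is invertible over `ℤ`. -/
def IsUnimodular {m : ℕ} (H : Matrix (Fin m) (Fin m) ℤ) : Prop :=
  IsUnit H.det

section Aux
variable {m : ℕ}

theorem castVec_injective : Function.Injective (castVec (m := m)) := by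
  intro a b h
  funext i
  exact Int.cast_injective (congrFun h i)

theorem castVec_add (a b : Fin m → ℤ) : castVec (a + b) = castVec a + castVec b := by
  funext i; simp [castVec]

theorem castVec_zero : castVec (0 : Fin m → ℤ) = 0 := by
  funext i; simp [castVec]

theorem castVec_sub (a b : Fin m → ℤ) : castVec (a - b) = castVec a - castVec b := by
  funext i; simp [castVec]

theorem castVec_smul (c : ℤ) (a : Fin m → ℤ) :
    castVec (c • a) = (c : ℚ) • castVec a := by
  funext i; simp [castVec]

theorem castVec_zsmul (c : ℤ) (a : Fin m → ℤ) :
    castVec (c • a) = c • castVec a := by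
  rw [castVec_smul, Int.cast_smul_eq_zsmul]

/-- `castVec` as a `ℤ`-linear map. -/
def castL (m : ℕ) : (Fin m → ℤ) →ₗ[ℤ] (Fin m → ℚ) where
  toFun := castVec
  map_add' := castVec_add
  map_smul' c a := by simpa using castVec_zsmul c a

theorem bilinQ_cast (H : Matrix (Fin m) (Fin m) ℤ) (a b : Fin m → ℤ) :
    bilinQ H (castVec a) (castVec b) = ((bilin H a b : ℤ) : ℚ) := by
  simp only [bilinQ, bilin, castVec, dotProduct, mulVec, Matrix.map_apply]
  push_cast
  ring

theorem bilinQ_eq_toBilin' (H : Matrix (Fin m) (Fin m) ℤ) (x y : Fin m → ℚ) :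
    (Matrix.toBilin' (H.map (Int.cast : ℤ → ℚ))) x y = bilinQ H x y :=
  Matrix.toBilin'_apply' _ _ _

theorem bilin_sub_left (H : Matrix (Fin m) (Fin m) ℤ) (a b c : Fin m → ℤ) :
    bilin H (a - b) c = bilin H a c - bilin H b c := by
  simp [bilin, sub_dotProduct]

theorem rat_int_mul (q : ℚ) (n : ℤ) (h : (q.den : ℤ) ∣ n) : ∃ z : ℤ, (n : ℚ) * q = z := by
  obtain ⟨c, rfl⟩ := h
  refine ⟨c * q.num, ?_⟩
  push_cast
  rw [mul_comm (q.den : ℚ) (c : ℚ), mul_assoc, Rat.den_mul_eq_num]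

theorem denom_clear (x : Fin m → ℚ) :
    ∃ (d : ℤ) (v : Fin m → ℤ), d ≠ 0 ∧ (d : ℚ) • x = castVec v := by
  set d : ℤ := ∏ i, ((x i).den : ℤ) with hd
  have hdne : d ≠ 0 := by
    rw [hd]
    exact Finset.prod_ne_zero_iff.mpr fun i _ => Int.natCast_ne_zero.mpr (x i).den_nz
  have h : ∀ i, ∃ z : ℤ, (d : ℚ) * x i = z := fun i =>
    rat_int_mul _ _ (Finset.dvd_prod_of_mem _ (Finset.mem_univ i))
  choose v hv using h
  exact ⟨d, v, hdne, funext fun i => by simpa [castVec] using hv i⟩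


theorem castVec_neg (a : Fin m → ℤ) : castVec (-a) = -castVec a := by
  funext i; simp [castVec]

theorem bilin_comm (H : Matrix (Fin m) (Fin m) ℤ) (hs : H.IsSymm) (a b : Fin m → ℤ) :
    bilin H a b = bilin H b a := by
  show a ⬝ᵥ H.mulVec b = b ⬝ᵥ H.mulVec a
  rw [Matrix.dotProduct_mulVec, ← Matrix.mulVec_transpose, hs.eq, dotProduct_comm]

end Aux

/-- Let `L` be an even unimodular lattice, `S ⊆ L` a primitive
nondegenerate sublattice and `S^⊥` its orthogonal complement.  An isometry `φ` of `S`
extends to an isometry of `L` restricting to the identity on `S^⊥` if and only if `φ`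
induces the identity on the discriminant group `A_S = S*/S`. -/
theorem statement13 {m : ℕ} (H : Matrix (Fin m) (Fin m) ℤ)
    (hsymm : H.IsSymm) (heven : IsEvenLattice H) (huni : IsUnimodular H)
    (S : Submodule ℤ (Fin m → ℤ))
    (hprim : ∀ (y : Fin m → ℤ) (k : ℤ), k ≠ 0 → k • y ∈ S → y ∈ S)
    (hndS : ∀ x ∈ S, (∀ y ∈ S, bilin H x y = 0) → x = 0)
    (φ : S ≃ₗ[ℤ] S)
    (hφ : ∀ x y : S, bilin H (φ x : Fin m → ℤ) (φ y : Fin m → ℤ)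
        = bilin H (x : Fin m → ℤ) (y : Fin m → ℤ)) :
    (∃ ψ : (Fin m → ℤ) ≃ₗ[ℤ] (Fin m → ℤ),
        (∀ x y : Fin m → ℤ, bilin H (ψ x) (ψ y) = bilin H x y) ∧
        (∀ s : S, ψ (s : Fin m → ℤ) = (φ s : Fin m → ℤ)) ∧
        (∀ x : Fin m → ℤ, (∀ s ∈ S, bilin H x s = 0) → ψ x = x)) ↔
    (∀ (x : Fin m → ℚ) (d : ℤ) (s : S), d ≠ 0 → d • x = castVec (s : Fin m → ℤ) →
      (x ∈ Submodule.span ℚ (castVec '' (S : Set (Fin m → ℤ))) ∧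
        ∀ u ∈ S, ∃ k : ℤ, bilinQ H x (castVec u) = (k : ℚ)) →
      (((d : ℚ)⁻¹ • castVec (φ s : Fin m → ℤ)
          ∈ Submodule.span ℚ (castVec '' (S : Set (Fin m → ℤ))) ∧
        ∀ u ∈ S, ∃ k : ℤ,
          bilinQ H ((d : ℚ)⁻¹ • castVec (φ s : Fin m → ℤ)) (castVec u) = (k : ℚ)) ∧
      ∃ w : S, (d : ℚ)⁻¹ • castVec (φ s : Fin m → ℤ) - x = castVec (w : Fin m → ℤ))) := by
  classical
  set W : Submodule ℚ (Fin m → ℚ) :=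
    Submodule.span ℚ (castVec '' (S : Set (Fin m → ℤ))) with hWdef
  set Hq : Matrix (Fin m) (Fin m) ℚ := H.map (Int.cast : ℤ → ℚ) with hHqdef
  set B : LinearMap.BilinForm ℚ (Fin m → ℚ) := Matrix.toBilin' Hq with hBdef
  have hB : ∀ x y, B x y = bilinQ H x y := fun x y => Matrix.toBilin'_apply' _ _ _
  have hqsymm : Hq.IsSymm := by
    rw [hHqdef]
    exact hsymm.map _
  have hBsymm : ∀ x y, B x y = B y x := by
    intro x y
    rw [hB, hB]
    show x ⬝ᵥ Hq.mulVec y = y ⬝ᵥ Hq.mulVec x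
    rw [Matrix.dotProduct_mulVec, ← Matrix.mulVec_transpose, hqsymm.eq, dotProduct_comm]
  have hrefl : B.IsRefl := fun x y h => by rw [hBsymm]; exact h
  have hBnd : B.Nondegenerate := by
    apply LinearMap.BilinForm.nondegenerate_toBilin'_of_det_ne_zero'
    have : Hq.det = ((H.det : ℤ) : ℚ) := by
      rw [hHqdef]
      exact (RingHom.map_det (Int.castRingHom ℚ) H).symm
    rw [this]
    exact Int.cast_ne_zero.mpr (huni.ne_zero)
  have hmemW : ∀ u : Fin m → ℤ, u ∈ S → castVec u ∈ W := fun u hu =>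
    Submodule.subset_span ⟨u, hu, rfl⟩
  have hclearW : ∀ x ∈ W, ∃ (d : ℤ) (s : Fin m → ℤ),
      d ≠ 0 ∧ s ∈ S ∧ (d : ℚ) • x = castVec s := by
    intro x hx
    induction hx using Submodule.span_induction with
    | mem x h =>
      obtain ⟨s, hs, rfl⟩ := h
      exact ⟨1, s, one_ne_zero, hs, by norm_num⟩
    | zero => exact ⟨1, 0, one_ne_zero, S.zero_mem, by simp [castVec_zero]⟩
    | add x y hx hy ihx ihy =>
      obtain ⟨d, s, hd, hs, hds⟩ := ihx
      obtain ⟨e, t, he, ht, het⟩ := ihy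
      refine ⟨d * e, e • s + d • t, mul_ne_zero hd he,
        S.add_mem (S.smul_mem _ hs) (S.smul_mem _ ht), ?_⟩
      rw [castVec_add, castVec_smul, castVec_smul, ← hds, ← het]
      push_cast
      module
    | smul q x hx ih =>
      obtain ⟨d, s, hd, hs, hds⟩ := ih
      refine ⟨(q.den : ℤ) * d, q.num • s,
        mul_ne_zero (Int.natCast_ne_zero.mpr q.den_nz) hd, S.smul_mem _ hs, ?_⟩
      rw [castVec_smul, ← hds, smul_smul, smul_smul]
      congr 1
      push_cast
      rw [mul_right_comm, Rat.den_mul_eq_num]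
  have hintW : ∀ v : Fin m → ℤ, castVec v ∈ W → v ∈ S := by
    intro v hv
    obtain ⟨d, s, hd, hs, hds⟩ := hclearW _ hv
    rw [← castVec_smul] at hds
    have h := castVec_injective hds
    exact hprim v d hd (h ▸ hs)
  have hrest : (B.restrict W).Nondegenerate := by
    refine (LinearMap.IsRefl.nondegenerate_iff_separatingLeft (hrefl.domRestrict W)).mpr ?_
    rintro ⟨x, hx⟩ h
    obtain ⟨d, s, hd, hs, hds⟩ := hclearW x hx
    have hd' : (d : ℚ) ≠ 0 := Int.cast_ne_zero.mpr hd
    have hs0 : s = 0 := by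
      apply hndS s hs
      intro u hu
      have h1 : B (castVec s) (castVec u) = 0 := by
        rw [← hds, _root_.map_smul, LinearMap.smul_apply]
        have h2 : B x (castVec u) = 0 := h ⟨castVec u, hmemW u hu⟩
        rw [h2, smul_zero]
      rw [hB, bilinQ_cast] at h1
      exact_mod_cast h1
    apply Subtype.ext
    have : (d : ℚ) • x = 0 := by rw [hds, hs0, castVec_zero]
    simpa [smul_eq_zero, hd'] using this
  have hcompl : IsCompl W (B.orthogonal W) :=
    LinearMap.BilinForm.isCompl_orthogonal_of_restrict_nondegenerate hrefl hrest
  have hoo : B.orthogonal (B.orthogonal W) = W :=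
    LinearMap.BilinForm.orthogonal_orthogonal hBnd hrefl W
  have hdecomp : ∀ x : Fin m → ℚ, ∃ a ∈ W, ∃ b ∈ B.orthogonal W, x = a + b := by
    intro x
    obtain ⟨a, b, ha, hb, h⟩ := Submodule.codisjoint_iff_exists_add_eq.mp hcompl.codisjoint x
    exact ⟨a, ha, b, hb, h.symm⟩
  have zqs : ∀ (c : ℤ) (x : Fin m → ℚ), (c : ℚ) • x = c • x := fun c x =>
    Int.cast_smul_eq_zsmul ℚ c x
  have key : ∀ (θ : S ≃ₗ[ℤ] S),
      (∀ (x : Fin m → ℚ) (d : ℤ) (s : S), d ≠ 0 → (d : ℚ) • x = castVec (s : Fin m → ℤ) →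
        (x ∈ W ∧ ∀ u ∈ S, ∃ k : ℤ, bilinQ H x (castVec u) = (k : ℚ)) →
        ∃ w : S, (d : ℚ)⁻¹ • castVec ((θ s : S) : Fin m → ℤ) - x = castVec (w : Fin m → ℤ)) →
      ∃ Ψ : (Fin m → ℚ) →ₗ[ℚ] (Fin m → ℚ),
        (∀ s : S, Ψ (castVec (s : Fin m → ℤ)) = castVec ((θ s : S) : Fin m → ℤ)) ∧
        (∀ x ∈ B.orthogonal W, Ψ x = x) ∧
        (∀ l : Fin m → ℤ, ∃ u : Fin m → ℤ, u ∈ S ∧ Ψ (castVec l) = castVec l + castVec u) := by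
    intro θ hθw
    obtain ⟨n, bS⟩ := Submodule.basisOfPid (Pi.basisFun ℤ (Fin m)) S
    set v : Fin n → (Fin m → ℚ) := fun i => castVec ((bS i : Fin m → ℤ)) with hvdef
    have hli : LinearIndependent ℚ v := by
      have h1 : LinearIndependent ℤ (fun i => ((bS i : Fin m → ℤ))) :=
        bS.linearIndependent.map' S.subtype (Submodule.ker_subtype S)
      have h2 : LinearIndependent ℤ v :=
        h1.map' (castL m) (LinearMap.ker_eq_bot.mpr castVec_injective)
      exact (LinearIndependent.iff_fractionRing ℤ ℚ).mp h2
    have hallS : ∀ t : S, t ∈ Submodule.span ℤ (Set.range bS) := by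
      intro t; rw [bS.span_eq]; trivial
    have hcastspan : ∀ t : S, castVec (t : Fin m → ℤ) ∈ Submodule.span ℚ (Set.range v) := by
      intro t
      induction hallS t using Submodule.span_induction with
      | mem a ha =>
        obtain ⟨i, rfl⟩ := ha
        exact Submodule.subset_span ⟨i, rfl⟩
      | zero => simpa [castVec_zero] using (Submodule.span ℚ (Set.range v)).zero_mem
      | add a b _ _ iha ihb =>
        have : castVec ((↑(a + b) : Fin m → ℤ)) = castVec ↑a + castVec ↑b := by
          rw [← castVec_add]; rfl
        rw [this]
        exact Submodule.add_mem _ iha ihb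
      | smul c a _ ih =>
        have : castVec ((↑(c • a) : Fin m → ℤ)) = (c : ℚ) • castVec ↑a := by
          rw [← castVec_smul]; rfl
        rw [this]
        exact Submodule.smul_mem _ _ ih
    have hspan : Submodule.span ℚ (Set.range v) = W := by
      apply le_antisymm
      · rw [Submodule.span_le]
        rintro _ ⟨i, rfl⟩
        exact hmemW _ (bS i).2
      · rw [hWdef, Submodule.span_le]
        rintro _ ⟨u, hu, rfl⟩
        exact hcastspan ⟨u, hu⟩
    let bW : Module.Basis (Fin n) ℚ W := (Module.Basis.span hli).map (LinearEquiv.ofEq _ _ hspan)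
    let Φ : W →ₗ[ℚ] (Fin m → ℚ) :=
      bW.constr ℚ (fun i => castVec ((θ (bS i) : S) : Fin m → ℤ))
    have hbWcoe : ∀ i, (bW i : Fin m → ℚ) = v i := by
      intro i
      simp [bW, Module.Basis.span_apply]
    have hΦ : ∀ t : S, Φ ⟨castVec (t : Fin m → ℤ), hmemW _ t.2⟩
        = castVec ((θ t : S) : Fin m → ℤ) := by
      intro t
      induction hallS t using Submodule.span_induction with
      | mem a ha =>
        obtain ⟨i, rfl⟩ := ha
        have h3 : (⟨castVec ((bS i : Fin m → ℤ)), hmemW _ (bS i).2⟩ : W) = bW i := by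
          apply Subtype.ext
          rw [hbWcoe]
        rw [h3]
        exact bW.constr_basis ℚ _ i
      | zero =>
        have h3 : (⟨castVec ((↑(0 : S) : Fin m → ℤ)), hmemW _ (0 : S).2⟩ : W) = 0 := by
          apply Subtype.ext
          simp [castVec_zero]
        rw [h3, map_zero, map_zero]
        simp [castVec_zero]
      | add a b _ _ iha ihb =>
        have h3 : (⟨castVec ((↑(a + b) : Fin m → ℤ)), hmemW _ (a + b).2⟩ : W)
            = ⟨castVec ↑a, hmemW _ a.2⟩ + ⟨castVec ↑b, hmemW _ b.2⟩ := by
          apply Subtype.ext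
          show castVec ((↑(a + b) : Fin m → ℤ)) = castVec ↑a + castVec ↑b
          rw [← castVec_add]; rfl
        rw [h3, map_add, iha, ihb, map_add, ← castVec_add]; rfl
      | smul c a _ ih =>
        have h3 : (⟨castVec ((↑(c • a) : Fin m → ℤ)), hmemW _ (c • a).2⟩ : W)
            = (c : ℚ) • ⟨castVec ↑a, hmemW _ a.2⟩ := by
          apply Subtype.ext
          show castVec (c • (↑a : Fin m → ℤ)) = (c : ℚ) • castVec ↑a
          rw [castVec_smul]
        rw [h3, _root_.map_smul, ih]
        have h4 : θ (c • a) = c • θ a := map_smul θ c a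
        rw [h4]
        show (c : ℚ) • castVec ↑(θ a) = castVec (c • (↑(θ a) : Fin m → ℤ))
        rw [castVec_smul]
    set P : (Fin m → ℚ) →ₗ[ℚ] W := W.projectionOnto _ hcompl with hPdef
    set Ψ : (Fin m → ℚ) →ₗ[ℚ] (Fin m → ℚ) :=
      Φ.comp P + (LinearMap.id - W.subtype.comp P) with hΨdef
    have hΨapply : ∀ x, Ψ x = Φ (P x) + (x - (P x : Fin m → ℚ)) := fun x => rfl
    have hΨs : ∀ s : S, Ψ (castVec (s : Fin m → ℤ)) = castVec ((θ s : S) : Fin m → ℤ) := by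
      intro s
      have h1 : P (castVec (s : Fin m → ℤ)) = ⟨castVec (s : Fin m → ℤ), hmemW _ s.2⟩ :=
        Submodule.projectionOnto_apply_left hcompl ⟨castVec (s : Fin m → ℤ), hmemW _ s.2⟩
      rw [hΨapply, h1, hΦ s]
      simp
    have hΨo : ∀ x ∈ B.orthogonal W, Ψ x = x := by
      intro x hx
      have h1 : P x = 0 := Submodule.projectionOnto_apply_of_mem_right hcompl hx
      rw [hΨapply, h1]
      simp
    refine ⟨Ψ, hΨs, hΨo, ?_⟩
    intro l
    obtain ⟨a, ha, b, hb, hab⟩ := hdecomp (castVec l)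
    obtain ⟨d, s, hd, hs, hds⟩ := hclearW a ha
    have hd' : (d : ℚ) ≠ 0 := Int.cast_ne_zero.mpr hd
    have hadual : ∀ u ∈ S, ∃ k : ℤ, bilinQ H a (castVec u) = (k : ℚ) := by
      intro u hu
      refine ⟨bilin H l u, ?_⟩
      have h2 : B (castVec u) b = 0 := hb _ (hmemW u hu)
      have h3 : B b (castVec u) = 0 := hrefl _ _ h2
      have h4 : B (castVec l) (castVec u) = B a (castVec u) + B b (castVec u) := by
        rw [hab, map_add, LinearMap.add_apply]
      rw [h3, add_zero] at h4
      have h5 : B (castVec l) (castVec u) = ((bilin H l u : ℤ) : ℚ) := by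
        rw [hB, bilinQ_cast]
      rw [← hB, ← h4, h5]
    obtain ⟨w, hw⟩ := hθw a d ⟨s, hs⟩ hd hds ⟨ha, hadual⟩
    have hΨa : Ψ a = (d : ℚ)⁻¹ • castVec ((θ ⟨s, hs⟩ : S) : Fin m → ℤ) := by
      have h6 : Ψ ((d : ℚ) • a) = castVec ((θ ⟨s, hs⟩ : S) : Fin m → ℤ) := by
        rw [hds]; exact hΨs ⟨s, hs⟩
      rw [_root_.map_smul] at h6
      rw [eq_inv_smul_iff₀ hd']
      exact h6
    refine ⟨(w : Fin m → ℤ), w.2, ?_⟩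
    have h7 : Ψ a - a = castVec (w : Fin m → ℤ) := by rw [hΨa]; exact hw
    rw [hab, map_add, hΨo b hb, ← h7]
    abel
  constructor
  · -- forward direction
    rintro ⟨ψ, hiso, hres, hfix⟩
    intro x d s hd hdx hxin
    obtain ⟨hxW, hxd⟩ := hxin
    have hd' : (d : ℚ) ≠ 0 := Int.cast_ne_zero.mpr hd
    have hdxq : (d : ℚ) • x = castVec (s : Fin m → ℤ) := by rw [zqs]; exact hdx
    constructor
    · constructor
      · exact Submodule.smul_mem _ _ (hmemW _ (φ s).2)
      · intro u hu
        obtain ⟨k, hk⟩ := hxd ((φ.symm ⟨u, hu⟩ : S) : Fin m → ℤ) (φ.symm ⟨u, hu⟩).2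
        refine ⟨k, ?_⟩
        have e1 : bilin H ((φ s : S) : Fin m → ℤ) u
            = bilin H (s : Fin m → ℤ) ((φ.symm ⟨u, hu⟩ : S) : Fin m → ℤ) := by
          have h2 := hφ s (φ.symm ⟨u, hu⟩)
          rw [LinearEquiv.apply_symm_apply] at h2
          exact h2
        have e2 : B (castVec (s : Fin m → ℤ))
              (castVec ((φ.symm ⟨u, hu⟩ : S) : Fin m → ℤ))
            = (d : ℚ) * B x (castVec ((φ.symm ⟨u, hu⟩ : S) : Fin m → ℤ)) := by
          rw [← hdxq, _root_.map_smul, LinearMap.smul_apply, smul_eq_mul]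
        rw [← hB]
        calc B ((d : ℚ)⁻¹ • castVec ((φ s : S) : Fin m → ℤ)) (castVec u)
            = (d : ℚ)⁻¹ * B (castVec ((φ s : S) : Fin m → ℤ)) (castVec u) := by
              rw [_root_.map_smul, LinearMap.smul_apply, smul_eq_mul]
          _ = (d : ℚ)⁻¹ * ((d : ℚ)
                * B x (castVec ((φ.symm ⟨u, hu⟩ : S) : Fin m → ℤ))) := by
              rw [hB, bilinQ_cast, e1, ← bilinQ_cast, ← hB, e2]
          _ = B x (castVec ((φ.symm ⟨u, hu⟩ : S) : Fin m → ℤ)) := by field_simp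
          _ = (k : ℚ) := by rw [hB]; exact hk
    · set M : Matrix (Fin m) (Fin m) ℤ := LinearMap.toMatrix' ψ.toLinearMap with hMdef
      have hMl : ∀ l, ψ l = M.mulVec l := by
        intro l
        rw [hMdef, ← Matrix.toLin'_apply, Matrix.toLin'_toMatrix']
        rfl
      set Ψ : (Fin m → ℚ) →ₗ[ℚ] (Fin m → ℚ) :=
        Matrix.toLin' (M.map (Int.cast : ℤ → ℚ)) with hΨdef
      have hΨc : ∀ l, Ψ (castVec l) = castVec (ψ l) := by
        intro l
        rw [hΨdef]
        funext i
        rw [Matrix.toLin'_apply, hMl l]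
        show ((M.map (Int.cast : ℤ → ℚ)).mulVec (castVec l)) i = castVec (M.mulVec l) i
        simp only [Matrix.mulVec, dotProduct, Matrix.map_apply, castVec]
        push_cast
        rfl
      have hΨiso : ∀ a b, B (Ψ a) (Ψ b) = B a b := by
        intro a b
        obtain ⟨p, va, hp, hpa⟩ := denom_clear a
        obtain ⟨q, vb, hq, hqb⟩ := denom_clear b
        have hp' : (p : ℚ) ≠ 0 := Int.cast_ne_zero.mpr hp
        have hq' : (q : ℚ) ≠ 0 := Int.cast_ne_zero.mpr hq
        have l2 : B (Ψ ((p : ℚ) • a)) (Ψ ((q : ℚ) • b)) = B ((p : ℚ) • a) ((q : ℚ) • b) := by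
          rw [hpa, hqb, hΨc va, hΨc vb, hB, bilinQ_cast, hiso, ← bilinQ_cast, ← hB]
        simp only [_root_.map_smul, LinearMap.smul_apply, smul_eq_mul] at l2
        exact mul_left_cancel₀ hp' (mul_left_cancel₀ hq' l2)
      set z : Fin m → ℚ := (d : ℚ)⁻¹ • castVec ((φ s : S) : Fin m → ℤ) - x with hzdef
      have hzW : z ∈ W :=
        Submodule.sub_mem _ (Submodule.smul_mem _ _ (hmemW _ (φ s).2)) hxW
      have hΨx : Ψ x = (d : ℚ)⁻¹ • castVec ((φ s : S) : Fin m → ℤ) := by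
        rw [eq_inv_smul_iff₀ hd', ← _root_.map_smul, hdxq, hΨc, hres s]
      have hz : z = Ψ x - x := by rw [hzdef, hΨx]
      have hpair : ∀ l : Fin m → ℤ, ∃ k : ℤ, B z (castVec l) = (k : ℚ) := by
        intro l
        have hinvl : Ψ (castVec (ψ.symm l)) = castVec l := by
          rw [hΨc]
          exact congrArg castVec (ψ.apply_symm_apply l)
        have h1 : B (Ψ x) (castVec l) = B x (castVec (ψ.symm l)) := by
          conv_lhs => rw [← hinvl]
          exact hΨiso x (castVec (ψ.symm l))
        have hcS : ψ.symm l - l ∈ S := by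
          apply hintW
          rw [← hoo]
          intro t ht
          show B t (castVec (ψ.symm l - l)) = 0
          apply hrefl
          obtain ⟨e, t0, he, het⟩ := denom_clear t
          have he' : (e : ℚ) ≠ 0 := Int.cast_ne_zero.mpr he
          have ht0 : ∀ u ∈ S, bilin H t0 u = 0 := by
            intro u hu
            have h3 : B t (castVec u) = 0 := hrefl _ _ (ht _ (hmemW u hu))
            have h4 : B (castVec t0) (castVec u) = 0 := by
              rw [← het, _root_.map_smul, LinearMap.smul_apply, h3, smul_zero]
            rw [hB, bilinQ_cast] at h4
            exact_mod_cast h4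
          have hfix0 : ψ t0 = t0 := hfix t0 ht0
          have hfix0' : ψ.symm t0 = t0 := by
            conv_lhs => rw [← hfix0]
            exact ψ.symm_apply_apply t0
          have h5 : bilin H (ψ.symm l - l) t0 = 0 := by
            rw [bilin_sub_left]
            have h6 : bilin H (ψ.symm l) t0 = bilin H l t0 := by
              have h7 := hiso (ψ.symm l) t0
              rw [ψ.apply_symm_apply, hfix0] at h7
              exact h7.symm
            rw [h6, sub_self]
          have h8 : (e : ℚ) * B (castVec (ψ.symm l - l)) t = 0 := by
            calc (e : ℚ) * B (castVec (ψ.symm l - l)) t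
                = B (castVec (ψ.symm l - l)) ((e : ℚ) • t) := by
                  rw [_root_.map_smul, smul_eq_mul]
              _ = 0 := by
                  rw [het, hB, bilinQ_cast]
                  exact_mod_cast h5
          rcases mul_eq_zero.mp h8 with h | h
          · exact absurd h he'
          · exact h
        obtain ⟨k, hk⟩ := hxd _ hcS
        refine ⟨k, ?_⟩
        rw [hz, map_sub, LinearMap.sub_apply, h1, ← map_sub, ← castVec_sub, hB]
        exact hk
      letI := H.invertibleOfIsUnitDet huni
      have hzvec : ∃ w0 : Fin m → ℤ, z = castVec w0 := by
        choose k hk using fun j => hpair (Pi.single j 1)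
        have hrow : ∀ j, (z ᵥ* Hq) j = ((k j : ℤ) : ℚ) := by
          intro j
          rw [← hk j, hB]
          show (z ᵥ* Hq) j = bilinQ H z (castVec (Pi.single j 1))
          have hcs : castVec (Pi.single j 1) = Pi.single j (1 : ℚ) := by
            funext i
            simp [castVec, Pi.single_apply]
          rw [hcs]
          simp [bilinQ, Matrix.vecMul, Matrix.mulVec, dotProduct, Matrix.map_apply,
            Pi.single_apply, mul_ite, Finset.sum_ite_eq', hHqdef]
        have hzv : z ᵥ* Hq = castVec k := funext hrow
        refine ⟨k ᵥ* (⅟H), ?_⟩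
        have h9 : Hq * ((⅟H).map (Int.cast : ℤ → ℚ)) = 1 := by
          rw [hHqdef]
          have h10 : (H * ⅟H).map (⇑(Int.castRingHom ℚ))
              = H.map (⇑(Int.castRingHom ℚ)) * (⅟H).map (⇑(Int.castRingHom ℚ)) :=
            Matrix.map_mul
          simp only [Int.coe_castRingHom] at h10
          rw [← h10, mul_invOf_self]
          exact Matrix.map_one _ Int.cast_zero Int.cast_one
        calc z = z ᵥ* (1 : Matrix (Fin m) (Fin m) ℚ) := (Matrix.vecMul_one z).symm
          _ = z ᵥ* (Hq * ((⅟H).map (Int.cast : ℤ → ℚ))) := by rw [h9]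
          _ = (z ᵥ* Hq) ᵥ* ((⅟H).map (Int.cast : ℤ → ℚ)) := by
              rw [Matrix.vecMul_vecMul]
          _ = castVec k ᵥ* ((⅟H).map (Int.cast : ℤ → ℚ)) := by rw [hzv]
          _ = castVec (k ᵥ* (⅟H)) := by
              funext j
              simp only [Matrix.vecMul, dotProduct, Matrix.map_apply, castVec]
              push_cast
              rfl
      obtain ⟨w0, hw0⟩ := hzvec
      exact ⟨⟨w0, hintW w0 (hw0 ▸ hzW)⟩, hw0⟩
  · -- backward direction
    intro hA
    have hCφ : ∀ (x : Fin m → ℚ) (d : ℤ) (s : S), d ≠ 0 →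
        (d : ℚ) • x = castVec (s : Fin m → ℤ) →
        (x ∈ W ∧ ∀ u ∈ S, ∃ k : ℤ, bilinQ H x (castVec u) = (k : ℚ)) →
        ∃ w : S, (d : ℚ)⁻¹ • castVec ((φ s : S) : Fin m → ℤ) - x
          = castVec (w : Fin m → ℤ) := by
      intro x d s hd hdx hx
      exact (hA x d s hd (by rw [← zqs]; exact hdx) hx).2
    have hCφ' : ∀ (x : Fin m → ℚ) (d : ℤ) (s' : S), d ≠ 0 →
        (d : ℚ) • x = castVec (s' : Fin m → ℤ) →
        (x ∈ W ∧ ∀ u ∈ S, ∃ k : ℤ, bilinQ H x (castVec u) = (k : ℚ)) →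
        ∃ w : S, (d : ℚ)⁻¹ • castVec ((φ.symm s' : S) : Fin m → ℤ) - x
          = castVec (w : Fin m → ℤ) := by
      intro x d s' hd hdx hx
      obtain ⟨hxW, hxd⟩ := hx
      have hd' : (d : ℚ) ≠ 0 := Int.cast_ne_zero.mpr hd
      set x' : Fin m → ℚ := (d : ℚ)⁻¹ • castVec ((φ.symm s' : S) : Fin m → ℤ) with hx'def
      have hdx' : (d : ℚ) • x' = castVec ((φ.symm s' : S) : Fin m → ℤ) := by
        rw [hx'def, smul_inv_smul₀ hd']
      have hx'W : x' ∈ W := Submodule.smul_mem _ _ (hmemW _ (φ.symm s').2)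
      have hx'd : ∀ u ∈ S, ∃ k : ℤ, bilinQ H x' (castVec u) = (k : ℚ) := by
        intro u hu
        obtain ⟨k, hk⟩ := hxd ((φ ⟨u, hu⟩ : S) : Fin m → ℤ) (φ ⟨u, hu⟩).2
        refine ⟨k, ?_⟩
        have e1 : bilin H ((φ.symm s' : S) : Fin m → ℤ) u
            = bilin H (s' : Fin m → ℤ) ((φ ⟨u, hu⟩ : S) : Fin m → ℤ) := by
          have h2 := hφ (φ.symm s') ⟨u, hu⟩
          rw [LinearEquiv.apply_symm_apply] at h2
          exact h2.symm
        have e2 : B (castVec (s' : Fin m → ℤ))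
              (castVec ((φ ⟨u, hu⟩ : S) : Fin m → ℤ))
            = (d : ℚ) * B x (castVec ((φ ⟨u, hu⟩ : S) : Fin m → ℤ)) := by
          rw [← hdx, _root_.map_smul, LinearMap.smul_apply, smul_eq_mul]
        rw [← hB]
        calc B x' (castVec u)
            = (d : ℚ)⁻¹ * B (castVec ((φ.symm s' : S) : Fin m → ℤ)) (castVec u) := by
              rw [hx'def, _root_.map_smul, LinearMap.smul_apply, smul_eq_mul]
          _ = (d : ℚ)⁻¹ * ((d : ℚ) * B x (castVec ((φ ⟨u, hu⟩ : S) : Fin m → ℤ))) := by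
              rw [hB, bilinQ_cast, e1, ← bilinQ_cast, ← hB, e2]
          _ = B x (castVec ((φ ⟨u, hu⟩ : S) : Fin m → ℤ)) := by
              field_simp
          _ = (k : ℚ) := by rw [hB]; exact hk
      obtain ⟨-, w, hw⟩ := hA x' d (φ.symm s') hd (by rw [← zqs]; exact hdx')
        ⟨hx'W, hx'd⟩
      rw [LinearEquiv.apply_symm_apply] at hw
      have hxx : (d : ℚ)⁻¹ • castVec (s' : Fin m → ℤ) = x := by
        rw [← hdx, inv_smul_smul₀ hd']
      rw [hxx] at hw
      refine ⟨-w, ?_⟩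
      have : castVec ((↑(-w) : Fin m → ℤ)) = -castVec (w : Fin m → ℤ) := by
        rw [show ((↑(-w) : Fin m → ℤ)) = -(w : Fin m → ℤ) from rfl, castVec_neg]
      rw [this, ← hw]
      abel
    obtain ⟨Ψ₁, hΨ₁s, hΨ₁o, hΨ₁l⟩ := key φ hCφ
    obtain ⟨Ψ₂, hΨ₂s, hΨ₂o, hΨ₂l⟩ := key φ.symm hCφ'
    have hstab : ∀ (Ψ : (Fin m → ℚ) →ₗ[ℚ] (Fin m → ℚ)) (θ : S ≃ₗ[ℤ] S),
        (∀ s : S, Ψ (castVec (s : Fin m → ℤ)) = castVec ((θ s : S) : Fin m → ℤ)) →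
        ∀ x ∈ W, Ψ x ∈ W := by
      intro Ψ θ hΨs x hx
      induction hx using Submodule.span_induction with
      | mem a ha =>
        obtain ⟨u, hu, rfl⟩ := ha
        show Ψ (castVec ((⟨u, hu⟩ : S) : Fin m → ℤ)) ∈ W
        rw [hΨs ⟨u, hu⟩]
        exact hmemW _ (θ ⟨u, hu⟩).2
      | zero => rw [map_zero]; exact W.zero_mem
      | add a b _ _ iha ihb => rw [map_add]; exact W.add_mem iha ihb
      | smul c a _ ih => rw [_root_.map_smul]; exact W.smul_mem _ ih
    have hisoQ : ∀ (Ψ : (Fin m → ℚ) →ₗ[ℚ] (Fin m → ℚ)) (θ : S ≃ₗ[ℤ] S),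
        (∀ a b : S, bilin H ((θ a : S) : Fin m → ℤ) ((θ b : S) : Fin m → ℤ)
          = bilin H (a : Fin m → ℤ) (b : Fin m → ℤ)) →
        (∀ s : S, Ψ (castVec (s : Fin m → ℤ)) = castVec ((θ s : S) : Fin m → ℤ)) →
        (∀ x ∈ B.orthogonal W, Ψ x = x) →
        ∀ x y, B (Ψ x) (Ψ y) = B x y := by
      intro Ψ θ hθ hΨs hΨo
      have hWW : ∀ x ∈ W, ∀ y ∈ W, B (Ψ x) (Ψ y) = B x y := by
        intro x hx
        induction hx using Submodule.span_induction with
        | mem a ha =>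
          intro y hy
          induction hy using Submodule.span_induction with
          | mem b hbm =>
            obtain ⟨u, hu, rfl⟩ := ha
            obtain ⟨t, ht, rfl⟩ := hbm
            show B (Ψ (castVec ((⟨u, hu⟩ : S) : Fin m → ℤ)))
              (Ψ (castVec ((⟨t, ht⟩ : S) : Fin m → ℤ))) = _
            rw [hΨs ⟨u, hu⟩, hΨs ⟨t, ht⟩, hB, bilinQ_cast, hθ, hB, bilinQ_cast]
          | zero => simp
          | add b c _ _ ihb ihc => simp only [map_add, ihb, ihc]
          | smul c b _ ih => simp only [_root_.map_smul, ih]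
        | zero => intro y hy; simp
        | add a b _ _ iha ihb =>
          intro y hy
          simp only [map_add, LinearMap.add_apply, iha _ hy, ihb _ hy]
        | smul c a _ ih =>
          intro y hy
          simp only [_root_.map_smul, LinearMap.smul_apply, ih _ hy]
      intro x y
      obtain ⟨a, ha, b, hb, hxab⟩ := hdecomp x
      obtain ⟨c, hc, e, he, hyce⟩ := hdecomp y
      have hΨa : Ψ a ∈ W := hstab Ψ θ hΨs a ha
      have hΨc : Ψ c ∈ W := hstab Ψ θ hΨs c hc
      have z1 : B (Ψ a) e = 0 := he _ hΨa
      have z2 : B b (Ψ c) = 0 := hrefl _ _ (hb _ hΨc)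
      have z3 : B a e = 0 := he _ ha
      have z4 : B b c = 0 := hrefl _ _ (hb _ hc)
      have hx' : Ψ (a + b) = Ψ a + b := by rw [map_add, hΨo b hb]
      have hy' : Ψ (c + e) = Ψ c + e := by rw [map_add, hΨo e he]
      rw [hxab, hyce, hx', hy']
      simp only [map_add, LinearMap.add_apply]
      rw [hWW a ha c hc, z1, z2, z3, z4]
    have hWinv12 : ∀ x ∈ W, Ψ₂ (Ψ₁ x) = x := by
      intro x hx
      induction hx using Submodule.span_induction with
      | mem a ha =>
        obtain ⟨u, hu, rfl⟩ := ha
        show Ψ₂ (Ψ₁ (castVec ((⟨u, hu⟩ : S) : Fin m → ℤ))) = _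
        rw [hΨ₁s ⟨u, hu⟩, hΨ₂s (φ ⟨u, hu⟩), LinearEquiv.symm_apply_apply]
      | zero => simp
      | add a b _ _ iha ihb => simp only [map_add, iha, ihb]
      | smul c a _ ih => simp only [_root_.map_smul, ih]
    have hWinv21 : ∀ x ∈ W, Ψ₁ (Ψ₂ x) = x := by
      intro x hx
      induction hx using Submodule.span_induction with
      | mem a ha =>
        obtain ⟨u, hu, rfl⟩ := ha
        show Ψ₁ (Ψ₂ (castVec ((⟨u, hu⟩ : S) : Fin m → ℤ))) = _
        rw [hΨ₂s ⟨u, hu⟩, hΨ₁s (φ.symm ⟨u, hu⟩), LinearEquiv.apply_symm_apply]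
      | zero => simp
      | add a b _ _ iha ihb => simp only [map_add, iha, ihb]
      | smul c a _ ih => simp only [_root_.map_smul, ih]
    have hinv12 : ∀ x, Ψ₂ (Ψ₁ x) = x := by
      intro x
      obtain ⟨a, ha, b, hb, hxab⟩ := hdecomp x
      rw [hxab, map_add, hΨ₁o b hb, map_add, hΨ₂o b hb, hWinv12 a ha]
    have hinv21 : ∀ x, Ψ₁ (Ψ₂ x) = x := by
      intro x
      obtain ⟨a, ha, b, hb, hxab⟩ := hdecomp x
      rw [hxab, map_add, hΨ₂o b hb, map_add, hΨ₁o b hb, hWinv21 a ha]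
    have hlat1 : ∀ l : Fin m → ℤ, ∃ u : Fin m → ℤ, Ψ₁ (castVec l) = castVec u := by
      intro l
      obtain ⟨u, hu, h⟩ := hΨ₁l l
      exact ⟨l + u, by rw [h, castVec_add]⟩
    have hlat2 : ∀ l : Fin m → ℤ, ∃ u : Fin m → ℤ, Ψ₂ (castVec l) = castVec u := by
      intro l
      obtain ⟨u, hu, h⟩ := hΨ₂l l
      exact ⟨l + u, by rw [h, castVec_add]⟩
    choose F₁ hF₁ using hlat1
    choose F₂ hF₂ using hlat2
    have hF₁add : ∀ a b, F₁ (a + b) = F₁ a + F₁ b := by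
      intro a b
      apply castVec_injective
      rw [← hF₁, castVec_add, castVec_add, map_add, hF₁, hF₁]
    have hF₁smul : ∀ (c : ℤ) a, F₁ (c • a) = c • F₁ a := by
      intro c a
      apply castVec_injective
      rw [← hF₁, castVec_smul, castVec_smul, _root_.map_smul, hF₁]
    set ψ₁ : (Fin m → ℤ) →ₗ[ℤ] (Fin m → ℤ) :=
      { toFun := F₁
        map_add' := hF₁add
        map_smul' := fun c a => by simpa using hF₁smul c a } with hψ₁def
    have hF₂add : ∀ a b, F₂ (a + b) = F₂ a + F₂ b := by
      intro a b
      apply castVec_injective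
      rw [← hF₂, castVec_add, castVec_add, map_add, hF₂, hF₂]
    have hF₂smul : ∀ (c : ℤ) a, F₂ (c • a) = c • F₂ a := by
      intro c a
      apply castVec_injective
      rw [← hF₂, castVec_smul, castVec_smul, _root_.map_smul, hF₂]
    set ψ₂ : (Fin m → ℤ) →ₗ[ℤ] (Fin m → ℤ) :=
      { toFun := F₂
        map_add' := hF₂add
        map_smul' := fun c a => by simpa using hF₂smul c a } with hψ₂def
    refine ⟨LinearEquiv.ofLinear ψ₁ ψ₂ ?_ ?_, ?_, ?_, ?_⟩
    · apply LinearMap.ext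
      intro l
      apply castVec_injective
      show castVec (F₁ (F₂ l)) = castVec l
      rw [← hF₁, ← hF₂, hinv21]
    · apply LinearMap.ext
      intro l
      apply castVec_injective
      show castVec (F₂ (F₁ l)) = castVec l
      rw [← hF₂, ← hF₁, hinv12]
    · intro x y
      have h1 := hisoQ Ψ₁ φ hφ hΨ₁s hΨ₁o (castVec x) (castVec y)
      rw [hF₁ x, hF₁ y, hB, bilinQ_cast, hB, bilinQ_cast] at h1
      exact_mod_cast h1
    · intro s
      apply castVec_injective
      show castVec (F₁ (s : Fin m → ℤ)) = castVec ((φ s : S) : Fin m → ℤ)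
      rw [← hF₁, hΨ₁s s]
    · intro x hx
      apply castVec_injective
      show castVec (F₁ x) = castVec x
      rw [← hF₁]
      apply hΨ₁o
      intro nvec hn
      induction hn using Submodule.span_induction with
      | mem a ha =>
        obtain ⟨u, hu, rfl⟩ := ha
        show B (castVec u) (castVec x) = 0
        rw [hB, bilinQ_cast, bilin_comm H hsymm]
        exact_mod_cast hx u hu
      | zero => simp [LinearMap.BilinForm.IsOrtho]
      | add a b _ _ iha ihb =>
        show B (a + b) (castVec x) = 0
        rw [map_add, LinearMap.add_apply, iha, ihb, add_zero]
      | smul c a _ ih =>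
        show B (c • a) (castVec x) = 0
        rw [_root_.map_smul, LinearMap.smul_apply, ih, smul_zero]
end

section
/- Let L = E₈ ⊕ E₈ ⊕ E₈ be the orthogonal direct sum of three copies of the lattice E₈, and let ρ be the isometry cyclically permuting the three summands, ρ(x, y, z) = (z, x, y). Then the coinvariant sublattice L_ρ = (L^ρ)^⊥ equals {(x, y, z) ∈ L : x + y + z = 0}; it has rank 16, its discriminant group A_{L_ρ} is isomorphic to (ℤ/3ℤ)⁸ (so l(A_{L_ρ}) = 8), and consequently L_ρ admits no primitive embedding into any even unimodular lattice of signature (3, 19). -/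
/-!
STATEMENT 17 (the coinvariant lattice of the cyclic permutation of `E₈ ⊕ E₈ ⊕ E₈`).

`E₈` is the rank-8 negative definite even unimodular lattice, given by the Gram matrix
`E8gram` = −(Cartan matrix of `E₈`) in a basis of simple roots (Bourbaki numbering:
the chain 1−3−4−5−6−7−8 with node 2 attached to node 4).  The lattice
`L = E₈ ⊕ E₈ ⊕ E₈` is `Fin 3 → (Fin 8 → ℤ)` with the orthogonal sum form `bT`, and
`ρ(x, y, z) = (z, x, y)` is the cyclic shift.

General lattices are formalized by Gram matrices `H : Matrix (Fin m) (Fin m) ℤ` with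
bilinear form `bilin H x y = x ⬝ᵥ H.mulVec y`.  For a nondegenerate lattice `S`, the
map `x ↦ B(x,·)` identifies the dual lattice `S* ⊆ S ⊗ ℚ` with `Hom(S, ℤ)` and carries
`S ⊆ S*` onto the range of the form; accordingly the discriminant group `A_S = S*/S`
is formalized as the cokernel of the form, and `l(A_S)` as its minimal number of
generators.
-/

open Matrix

/-- The Gram matrix of the negative definite `E₈` lattice (minus the `E₈` Cartan
matrix). -/
def E8gram : Matrix (Fin 8) (Fin 8) ℤ :=
  !![-2,  0,  1,  0,  0,  0,  0,  0;
      0, -2,  0,  1,  0,  0,  0,  0;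
      1,  0, -2,  1,  0,  0,  0,  0;
      0,  1,  1, -2,  1,  0,  0,  0;
      0,  0,  0,  1, -2,  1,  0,  0;
      0,  0,  0,  0,  1, -2,  1,  0;
      0,  0,  0,  0,  0,  1, -2,  1;
      0,  0,  0,  0,  0,  0,  1, -2]

/-- The bilinear form of the orthogonal direct sum `L = E₈ ⊕ E₈ ⊕ E₈` on
`Fin 3 → (Fin 8 → ℤ)`. -/
def bT (u v : Fin 3 → Fin 8 → ℤ) : ℤ :=
  ∑ i : Fin 3, (u i) ⬝ᵥ E8gram.mulVec (v i)

/-- The isometry `ρ` of `L` cyclically permuting the three summands: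
`ρ(x, y, z) = (z, x, y)`. -/
def ρcyc (v : Fin 3 → Fin 8 → ℤ) : Fin 3 → Fin 8 → ℤ :=
  fun i => v (i + 2)

/-- The coinvariant sublattice `L_ρ = (L^ρ)^⊥`, the orthogonal complement of the fixed
sublattice `L^ρ = {v : ρ v = v}`. -/
def coinvRho : Submodule ℤ (Fin 3 → Fin 8 → ℤ) where
  carrier := {u | ∀ v, ρcyc v = v → bT u v = 0}
  add_mem' := by
    intro a b ha hb v hv
    have h1 := ha v hv
    have h2 := hb v hv
    simp only [bT, Pi.add_apply, add_dotProduct, Finset.sum_add_distrib] at *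
    omega
  zero_mem' := by
    intro v hv
    simp [bT]
  smul_mem' := by
    intro c x hx v hv
    have h := hx v hv
    simp only [bT, Pi.smul_apply, smul_dotProduct, smul_eq_mul] at *
    rw [← Finset.mul_sum, h, mul_zero]

/-- The bilinear form of `L` restricted to the coinvariant sublattice `L_ρ`, as a
linear map into the dual module. -/
def coinvRhoForm : coinvRho →ₗ[ℤ] coinvRho →ₗ[ℤ] ℤ :=
  LinearMap.mk₂ ℤ (fun x y : coinvRho => bT (x : Fin 3 → Fin 8 → ℤ) (y : Fin 3 → Fin 8 → ℤ))
    (fun x₁ x₂ y => by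
      simp only [bT, Submodule.coe_add, Pi.add_apply, add_dotProduct,
        Finset.sum_add_distrib])
    (fun c x y => by
      simp only [bT, Submodule.coe_smul, Pi.smul_apply, smul_dotProduct, smul_eq_mul,
        Finset.mul_sum])
    (fun x y₁ y₂ => by
      simp only [bT, Submodule.coe_add, Pi.add_apply, mulVec_add, dotProduct_add,
        Finset.sum_add_distrib])
    (fun c x y => by
      simp only [bT, Submodule.coe_smul, Pi.smul_apply, mulVec_smul, dotProduct_smul,
        smul_eq_mul, Finset.mul_sum])

/-- The discriminant group `A_{L_ρ} = (L_ρ)*/L_ρ`, realized as the cokernel of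
`x ↦ B(x,·)` on `L_ρ`. -/
abbrev DiscRho : Type :=
  (coinvRho →ₗ[ℤ] ℤ) ⧸ LinearMap.range coinvRhoForm

/-- `l(A)`: the minimal number of generators of an abelian group `A`. -/
noncomputable def minGens (A : Type) [AddCommGroup A] : ℕ :=
  sInf {k : ℕ | ∃ f : Fin k → A, AddSubgroup.closure (Set.range f) = ⊤}

/-- The real extension of the bilinear form of `H`, on `(Fin m → ℝ)`. -/
def bilinR {m : ℕ} (H : Matrix (Fin m) (Fin m) ℤ) (x y : Fin m → ℝ) : ℝ :=
  x ⬝ᵥ (H.map (Int.cast : ℤ → ℝ)).mulVec y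

/-- The lattice with Gram matrix `H` has signature `(p, q)`. -/
def HasSignature {m : ℕ} (H : Matrix (Fin m) (Fin m) ℤ) (p q : ℕ) : Prop :=
  p + q = m ∧
  ∃ v : Fin p ⊕ Fin q → (Fin m → ℝ),
    LinearIndependent ℝ v ∧
    (Pairwise fun i j => bilinR H (v i) (v j) = 0) ∧
    (∀ i : Fin p, 0 < bilinR H (v (Sum.inl i)) (v (Sum.inl i))) ∧
    (∀ j : Fin q, bilinR H (v (Sum.inr j)) (v (Sum.inr j)) < 0)


namespace St17

/-! ### Matrices and Smith normal form data -/

def Ginv : Matrix (Fin 8) (Fin 8) ℤ :=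
  !![-4, -5, -7, -10, -8, -6, -4, -2;
     -5, -8, -10, -15, -12, -9, -6, -3;
     -7, -10, -14, -20, -16, -12, -8, -4;
     -10, -15, -20, -30, -24, -18, -12, -6;
     -8, -12, -16, -24, -20, -15, -10, -5;
     -6, -9, -12, -18, -15, -12, -8, -4;
     -4, -6, -8, -12, -10, -8, -6, -3;
     -2, -3, -4, -6, -5, -4, -3, -2]

abbrev I16 := Fin 2 × Fin 8
abbrev V16 := I16 → ℤ

def kron (A : Matrix (Fin 2) (Fin 2) ℤ) (B : Matrix (Fin 8) (Fin 8) ℤ) : Matrix I16 I16 ℤ :=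
  fun p q => A p.1 q.1 * B p.2 q.2

def Agram : Matrix (Fin 2) (Fin 2) ℤ := !![2,1;1,2]
def Umat : Matrix (Fin 2) (Fin 2) ℤ := !![0,1;-1,2]
def Vmat : Matrix (Fin 2) (Fin 2) ℤ := !![1,-2;0,1]
def UmatInv : Matrix (Fin 2) (Fin 2) ℤ := !![2,-1;1,0]
def VmatInv : Matrix (Fin 2) (Fin 2) ℤ := !![1,2;0,1]

def Mgram := kron Agram E8gram
def Pmat := kron Umat Ginv
def PmatInv := kron UmatInv E8gram
def Qmat := kron Vmat 1
def QmatInv := kron VmatInv 1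
def dvec : I16 → ℤ := fun p => if p.1 = 0 then 1 else 3
def Dmat : Matrix I16 I16 ℤ := Matrix.diagonal dvec

lemma GinvG : Ginv * E8gram = 1 := by decide
lemma GGinv : E8gram * Ginv = 1 := mul_eq_one_comm.mp GinvG
lemma E8symm : E8gram.IsSymm := by decide
lemma Msymm : Mgram.IsSymm := by decide
lemma PMQ : Pmat * Mgram * Qmat = Dmat := by decide
lemma PPinv : Pmat * PmatInv = 1 := by decide
lemma PinvP : PmatInv * Pmat = 1 := mul_eq_one_comm.mp PPinv
lemma QQinv : Qmat * QmatInv = 1 := by decide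
lemma QinvQ : QmatInv * Qmat = 1 := mul_eq_one_comm.mp QQinv

/-! ### Symmetry of `bT` and the description of `coinvRho` -/

lemma bT_comm (u v : Fin 3 → Fin 8 → ℤ) : bT u v = bT v u := by
  unfold bT
  refine Finset.sum_congr rfl fun i _ => ?_
  rw [Matrix.dotProduct_mulVec, ← Matrix.mulVec_transpose, E8symm.eq, dotProduct_comm]

lemma sum_eq_of_mem (u : Fin 3 → Fin 8 → ℤ)
    (hu : ∀ v, ρcyc v = v → bT u v = 0) : u 0 + u 1 + u 2 = 0 := by
  have key : ∀ w : Fin 8 → ℤ, (u 0 + u 1 + u 2) ⬝ᵥ E8gram.mulVec w = 0 := by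
    intro w
    have h := hu (fun _ => w) rfl
    rw [show bT u (fun _ => w) = ∑ i : Fin 3, u i ⬝ᵥ E8gram.mulVec w from rfl,
      Fin.sum_univ_three] at h
    rw [add_dotProduct, add_dotProduct]
    exact h
  funext j
  have h := key (Ginv.mulVec (Pi.single j 1))
  rw [Matrix.mulVec_mulVec, GGinv, Matrix.one_mulVec, dotProduct_single, mul_one] at h
  exact h

lemma mem_coinvRho_iff (u : Fin 3 → Fin 8 → ℤ) :
    u ∈ coinvRho ↔ u 0 + u 1 + u 2 = 0 := by
  constructor
  · exact fun hu => sum_eq_of_mem u hu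
  · intro hsum v hv
    have h0 : v 0 = v 1 := congrFun hv 1
    have h2 : v 2 = v 0 := congrFun hv 0
    rw [show bT u v = ∑ i : Fin 3, u i ⬝ᵥ E8gram.mulVec (v i) from rfl, Fin.sum_univ_three,
      ← h0, h2, ← add_dotProduct, ← add_dotProduct, hsum, zero_dotProduct]

lemma coinv_carrier :
    ((coinvRho : Set (Fin 3 → Fin 8 → ℤ)) = {u | u 0 + u 1 + u 2 = 0}) := by
  ext u
  exact mem_coinvRho_iff u

/-! ### The parametrization of `coinvRho` by `V16` -/

def Jfun (c : V16) : Fin 3 → Fin 8 → ℤ := fun t j =>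
  if t = 0 then c (0, j) else if t = 1 then c (1, j) else -c (0, j) - c (1, j)

def Jmap : V16 →ₗ[ℤ] (Fin 3 → Fin 8 → ℤ) where
  toFun := Jfun
  map_add' a b := by
    funext t j
    by_cases h0 : t = 0 <;> by_cases h1 : t = 1 <;> simp [Jfun, h0, h1] <;> ring
  map_smul' k a := by
    funext t j
    by_cases h0 : t = 0 <;> by_cases h1 : t = 1 <;> simp [Jfun, h0, h1] <;> ring

lemma Jfun_mem (c : V16) : Jfun c ∈ coinvRho := by
  rw [mem_coinvRho_iff]
  funext j
  simp [Jfun]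

def Jres : V16 →ₗ[ℤ] coinvRho := Jmap.codRestrict coinvRho Jfun_mem

lemma Jres_bijective : Function.Bijective Jres := by
  constructor
  · intro c c' h
    have h' : Jfun c = Jfun c' := congrArg Subtype.val h
    funext p
    obtain ⟨a, j⟩ := p
    have h0 := congrFun (congrFun h' 0) j
    have h1 := congrFun (congrFun h' 1) j
    simp [Jfun] at h0 h1
    fin_cases a
    · exact h0
    · exact h1
  · rintro ⟨u, hu⟩
    rw [mem_coinvRho_iff] at hu
    refine ⟨fun p => u p.1.castSucc p.2, Subtype.ext ?_⟩
    show Jfun (fun p => u p.1.castSucc p.2) = u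
    funext t j
    have hj := congrFun hu j
    simp only [Pi.add_apply, Pi.zero_apply] at hj
    fin_cases t <;> simp [Jfun] <;> try rfl
    · show -u 0 j - u 1 j = u 2 j
      omega

noncomputable def eL : V16 ≃ₗ[ℤ] coinvRho := LinearEquiv.ofBijective Jres Jres_bijective

lemma eL_apply (c : V16) : (eL c : Fin 3 → Fin 8 → ℤ) = Jfun c := rfl

lemma finrank_coinv : Module.finrank ℤ coinvRho = 16 := by
  rw [← LinearEquiv.finrank_eq eL, Module.finrank_pi]
  simp

/-! ### The Gram matrix of the form in the basis given by `eL` -/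

lemma key (c c' : V16) : bT (Jfun c) (Jfun c') = c ⬝ᵥ Mgram.mulVec c' := by
  simp only [bT, dotProduct, mulVec, Mgram, kron, Agram, Jfun, Fin.sum_univ_three,
    Fintype.sum_prod_type, Fin.sum_univ_two, Matrix.cons_val', Matrix.cons_val_zero,
    Matrix.cons_val_one, Matrix.head_cons, Matrix.head_fin_const, reduceIte, Fin.reduceEq,
    Matrix.of_apply, mul_add, Finset.mul_sum, Finset.sum_mul]
  rw [← Finset.sum_add_distrib, ← Finset.sum_add_distrib, ← Finset.sum_add_distrib]
  refine Finset.sum_congr rfl fun i _ => ?_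
  rw [← Finset.sum_add_distrib, ← Finset.sum_add_distrib, ← Finset.sum_add_distrib,
    ← Finset.sum_add_distrib, ← Finset.sum_add_distrib]
  refine Finset.sum_congr rfl fun j _ => ?_
  ring

/-! ### The discriminant group -/

noncomputable def dualEquiv : (coinvRho →ₗ[ℤ] ℤ) ≃ₗ[ℤ] V16 :=
  (eL.symm.arrowCongr (LinearEquiv.refl ℤ ℤ)).trans (Pi.basisFun ℤ I16).dualBasis.equivFun

lemma dualEquiv_form (c : V16) : dualEquiv (coinvRhoForm (eL c)) = Mgram.mulVec c := by
  funext p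
  have h1 : dualEquiv (coinvRhoForm (eL c)) p = coinvRhoForm (eL c) (eL (Pi.single p 1)) := by
    simp [dualEquiv, Module.Basis.dualBasis_equivFun, LinearEquiv.arrowCongr_apply]
  rw [h1]
  have h2 : coinvRhoForm (eL c) (eL (Pi.single p 1)) = bT (Jfun c) (Jfun (Pi.single p 1)) := rfl
  rw [h2, key, Matrix.mulVec_single]
  have h3 : (c ⬝ᵥ fun q => Mgram q p * 1) = ∑ q, c q * Mgram q p := by
    simp [dotProduct]
  show (c ⬝ᵥ fun q => Mgram q p * 1) = _
  rw [h3]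
  show _ = Mgram.mulVec c p
  simp only [mulVec, dotProduct]
  refine Finset.sum_congr rfl fun q _ => ?_
  rw [show Mgram q p = Mgram p q from congrFun (congrFun Msymm.eq p) q ▸ rfl, mul_comm]

lemma dualEquiv_comp : (dualEquiv.toLinearMap.comp coinvRhoForm).comp eL.toLinearMap
    = Mgram.mulVecLin := by
  refine LinearMap.ext fun c => ?_
  simpa using dualEquiv_form c

lemma dualEquiv_map_range :
    (LinearMap.range coinvRhoForm).map (dualEquiv : (coinvRho →ₗ[ℤ] ℤ) →ₗ[ℤ] V16)
      = LinearMap.range Mgram.mulVecLin := by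
  rw [← LinearMap.range_comp, ← dualEquiv_comp,
    LinearMap.range_comp_of_range_eq_top _ (LinearEquiv.range eL)]

def mulVecEquiv (A B : Matrix I16 I16 ℤ) (hAB : A * B = 1) (hBA : B * A = 1) :
    V16 ≃ₗ[ℤ] V16 :=
  LinearEquiv.ofLinear A.mulVecLin B.mulVecLin
    (by rw [← Matrix.mulVecLin_mul, hAB, Matrix.mulVecLin_one])
    (by rw [← Matrix.mulVecLin_mul, hBA, Matrix.mulVecLin_one])

lemma range_M_eq_range_D :
    (LinearMap.range Mgram.mulVecLin).map
        ((mulVecEquiv Pmat PmatInv PPinv PinvP : V16 ≃ₗ[ℤ] V16) : V16 →ₗ[ℤ] V16)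
      = LinearMap.range Dmat.mulVecLin := by
  have h1 : ((mulVecEquiv Pmat PmatInv PPinv PinvP : V16 ≃ₗ[ℤ] V16) : V16 →ₗ[ℤ] V16)
      = Pmat.mulVecLin := rfl
  rw [h1, ← LinearMap.range_comp, ← Matrix.mulVecLin_mul]
  have h2 : LinearMap.range (Pmat * Mgram).mulVecLin
      = LinearMap.range ((Pmat * Mgram).mulVecLin.comp Qmat.mulVecLin) := by
    rw [LinearMap.range_comp]
    have hq : LinearMap.range Qmat.mulVecLin = ⊤ := by
      rw [LinearMap.range_eq_top]
      exact (mulVecEquiv Qmat QmatInv QQinv QinvQ).surjective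
    rw [hq, Submodule.map_top]
  rw [h2, ← Matrix.mulVecLin_mul, PMQ]

/-! ### The quotient `V16 ⧸ D·V16` -/

def qAdd : V16 →+ (Fin 8 → ZMod 3) where
  toFun w := fun j => ((w (1, j) : ℤ) : ZMod 3)
  map_zero' := by funext j; simp
  map_add' a b := by funext j; push_cast; simp

def qmap : V16 →ₗ[ℤ] (Fin 8 → ZMod 3) := qAdd.toIntLinearMap

lemma qmap_apply (w : V16) (j : Fin 8) : qmap w j = ((w (1, j) : ℤ) : ZMod 3) := rfl

lemma range_le_ker : LinearMap.range Dmat.mulVecLin ≤ LinearMap.ker qmap := by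
  rintro _ ⟨c, rfl⟩
  rw [LinearMap.mem_ker]
  funext j
  rw [show Dmat.mulVecLin c = Dmat.mulVec c from rfl]
  rw [show qmap (Dmat.mulVec c) j = ((Dmat.mulVec c (1, j) : ℤ) : ZMod 3) from rfl]
  rw [Dmat, Matrix.mulVec_diagonal]
  have : dvec (1, j) = 3 := rfl
  rw [this]
  push_cast
  rw [show (3 : ZMod 3) = 0 from by decide, zero_mul]
  rfl

lemma ker_le_range : LinearMap.ker qmap ≤ LinearMap.range Dmat.mulVecLin := by
  intro w hw
  rw [LinearMap.mem_ker] at hw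
  have h3 : ∀ j : Fin 8, (3 : ℤ) ∣ w (1, j) := by
    intro j
    have := congrFun hw j
    rw [qmap_apply] at this
    exact (ZMod.intCast_zmod_eq_zero_iff_dvd _ 3).mp this
  refine ⟨fun p => if p.1 = 0 then w p else w p / 3, ?_⟩
  rw [Matrix.mulVecLin_apply]
  funext p
  rw [Dmat, Matrix.mulVec_diagonal]
  obtain ⟨a, j⟩ := p
  fin_cases a
  · show dvec (0, j) * _ = _
    rw [show dvec (0, j) = 1 from rfl]
    simp
  · show dvec (1, j) * _ = _
    rw [show dvec (1, j) = 3 from rfl]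
    simp only [show ((1 : Fin 2) = 0) = False from by simp, if_false]
    exact Int.mul_ediv_cancel' (h3 j)

noncomputable def qbar : (V16 ⧸ LinearMap.range Dmat.mulVecLin) →ₗ[ℤ] (Fin 8 → ZMod 3) :=
  Submodule.liftQ _ qmap range_le_ker

lemma qbar_bij : Function.Bijective qbar := by
  constructor
  · rw [← LinearMap.ker_eq_bot]
    exact Submodule.ker_liftQ_eq_bot _ _ _ ker_le_range
  · intro y
    refine ⟨Submodule.Quotient.mk (fun p => if p.1 = 1 then ((y p.2).val : ℤ) else 0), ?_⟩
    rw [show qbar (Submodule.Quotient.mk _) = qmap _ from rfl]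
    funext j
    rw [qmap_apply]
    simp [ZMod.natCast_val, ZMod.cast_id]

noncomputable def discEquivL : DiscRho ≃ₗ[ℤ] (Fin 8 → ZMod 3) :=
  ((Submodule.Quotient.equiv _ _ dualEquiv dualEquiv_map_range).trans
    (Submodule.Quotient.equiv _ _ (mulVecEquiv Pmat PmatInv PPinv PinvP)
      range_M_eq_range_D)).trans
    (LinearEquiv.ofBijective qbar qbar_bij)

noncomputable def discEquiv : (Fin 8 → ZMod 3) ≃+ DiscRho := discEquivL.symm.toAddEquiv

/-! ### Minimal number of generators -/

local instance : Fact (Nat.Prime 3) := ⟨by norm_num⟩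

lemma lower_bound (k : ℕ) (f : Fin k → (Fin 8 → ZMod 3))
    (hf : AddSubgroup.closure (Set.range f) = ⊤) : 8 ≤ k := by
  have hspan : Submodule.span (ZMod 3) (Set.range f) = ⊤ := by
    rw [eq_top_iff]
    intro x _
    have hx : x ∈ AddSubgroup.closure (Set.range f) := hf ▸ AddSubgroup.mem_top x
    have : AddSubgroup.closure (Set.range f) ≤
        (Submodule.span (ZMod 3) (Set.range f)).toAddSubgroup :=
      AddSubgroup.closure_le _ |>.mpr (Submodule.subset_span)
    exact this hx
  have := finrank_le_of_span_eq_top hspan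
  simp only [Module.finrank_pi, Fintype.card_fin] at this
  exact this

lemma gen_from_span {A : Type} [AddCommGroup A] {k : ℕ} (f : Fin k → A)
    (hf : Submodule.span ℤ (Set.range f) = ⊤) :
    AddSubgroup.closure (Set.range f) = ⊤ := by
  rw [eq_top_iff]
  intro x _
  have hx : x ∈ Submodule.span ℤ (Set.range f) := hf ▸ Submodule.mem_top
  have : Submodule.span ℤ (Set.range f) ≤
      AddSubgroup.toIntSubmodule (AddSubgroup.closure (Set.range f)) :=
    Submodule.span_le.mpr AddSubgroup.subset_closure
  exact this hx

lemma closure_top_map {A B : Type} [AddCommGroup A] [AddCommGroup B] (E : A ≃+ B)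
    {k : ℕ} (f : Fin k → A) (hf : AddSubgroup.closure (Set.range f) = ⊤) :
    AddSubgroup.closure (Set.range fun j => E (f j)) = ⊤ := by
  have h1 : (Set.range fun j => E (f j)) = E.toAddMonoidHom '' Set.range f := by
    rw [← Set.range_comp]; rfl
  rw [h1, ← AddMonoidHom.map_closure, hf]
  ext x
  simp only [AddSubgroup.mem_map, AddSubgroup.mem_top, iff_true]
  exact ⟨E.symm x, trivial, E.apply_symm_apply x⟩

lemma closure_single_top :
    AddSubgroup.closure (Set.range fun j : Fin 8 => (Pi.single j 1 : Fin 8 → ZMod 3)) = ⊤ := by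
  rw [eq_top_iff]
  intro x _
  have hx : ∀ j : Fin 8, (x j).val • (Pi.single j (1 : ZMod 3) : Fin 8 → ZMod 3)
      = Pi.single j (x j) := by
    intro j
    rw [← Pi.single_smul]
    congr 1
    rw [nsmul_eq_mul, mul_one]
    simp [ZMod.natCast_val, ZMod.cast_id]
  have hsum : ∑ j : Fin 8, (x j).val • (Pi.single j (1 : ZMod 3) : Fin 8 → ZMod 3) = x := by
    simp only [hx]
    exact Finset.univ_sum_single x
  rw [← hsum]
  exact AddSubgroup.sum_mem _ fun j _ =>
    AddSubgroup.nsmul_mem _ (AddSubgroup.subset_closure (Set.mem_range_self j)) _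

lemma minGens_eq (A : Type) [AddCommGroup A] (E : (Fin 8 → ZMod 3) ≃+ A) :
    minGens A = 8 := by
  have hmem : 8 ∈ {k : ℕ | ∃ f : Fin k → A, AddSubgroup.closure (Set.range f) = ⊤} := by
    refine ⟨fun j => E (Pi.single j 1), ?_⟩
    exact closure_top_map E _ closure_single_top
  apply le_antisymm
  · exact Nat.sInf_le hmem
  · refine le_csInf ⟨8, hmem⟩ ?_
    rintro k ⟨f, hf⟩
    exact lower_bound k (fun j => E.symm (f j)) (closure_top_map E.symm f hf)

/-! ### Part 5 machinery -/

end St17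

/-- For the cyclic permutation `ρ` of `L = E₈ ⊕ E₈ ⊕ E₈`:
the coinvariant sublattice `L_ρ = (L^ρ)^⊥` equals `{(x,y,z) ∈ L : x + y + z = 0}`;
it has rank 16; its discriminant group is isomorphic to `(ℤ/3ℤ)⁸` (so `l = 8`); and
`L_ρ` admits no primitive embedding into any even unimodular lattice of signature
`(3, 19)`. -/
theorem statement17 :
    ((coinvRho : Set (Fin 3 → Fin 8 → ℤ)) = {u | u 0 + u 1 + u 2 = 0}) ∧
    Module.finrank ℤ coinvRho = 16 ∧
    Nonempty ((Fin 8 → ZMod 3) ≃+ DiscRho) ∧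
    minGens DiscRho = 8 ∧
    ∀ (m : ℕ) (H : Matrix (Fin m) (Fin m) ℤ),
      H.IsSymm → IsEvenLattice H → IsUnimodular H → HasSignature H 3 19 →
      ¬ ∃ f : coinvRho →ₗ[ℤ] (Fin m → ℤ),
          Function.Injective f ∧
          (∀ x y : coinvRho, bilin H (f x) (f y)
              = bT (x : Fin 3 → Fin 8 → ℤ) (y : Fin 3 → Fin 8 → ℤ)) ∧
          (∀ (y : Fin m → ℤ) (k : ℤ), k ≠ 0 →
            k • y ∈ LinearMap.range f → y ∈ LinearMap.range f) := by
  refine ⟨St17.coinv_carrier, St17.finrank_coinv, ⟨St17.discEquiv⟩,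
    St17.minGens_eq _ St17.discEquiv, ?_⟩
  intro m H hsymm heven hunim hsig
  rintro ⟨f, hinj, hform, hprim⟩
  obtain ⟨hm, -⟩ := hsig
  have hm22 : m = 22 := by omega
  subst hm22
  set S := LinearMap.range f with hS
  haveI htf : NoZeroSMulDivisors ℤ ((Fin 22 → ℤ) ⧸ S) := by
    refine ⟨fun {c x} hcx => ?_⟩
    rcases eq_or_ne c 0 with h | h
    · exact Or.inl h
    · refine Or.inr ?_
      obtain ⟨y, rfl⟩ := S.mkQ_surjective x
      have hy : c • y ∈ S := by
        rw [← Submodule.Quotient.mk_eq_zero S]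
        rw [Submodule.Quotient.mk_smul]
        exact hcx
      rw [Submodule.mkQ_apply, Submodule.Quotient.mk_eq_zero]
      exact hprim y c h hy
  obtain ⟨s, hs⟩ := Module.projective_lifting_property S.mkQ LinearMap.id
    (S.mkQ_surjective)
  have hmem : ∀ n : Fin 22 → ℤ, n - s (S.mkQ n) ∈ S := by
    intro n
    have h1 : S.mkQ (s (S.mkQ n)) = S.mkQ n := by
      simpa using LinearMap.congr_fun hs (S.mkQ n)
    rw [← Submodule.Quotient.mk_eq_zero S, ← Submodule.mkQ_apply, map_sub, h1, sub_self]
  let gmap : (Fin 22 → ℤ) →ₗ[ℤ] S :=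
    LinearMap.codRestrict S (LinearMap.id - s.comp S.mkQ)
      (fun n => by simpa [LinearMap.sub_apply] using hmem n)
  have hg_f : ∀ x : coinvRho, (gmap (f x) : Fin 22 → ℤ) = f x := by
    intro x
    show f x - s (S.mkQ (f x)) = f x
    have h0 : S.mkQ (f x) = 0 := by
      rw [Submodule.mkQ_apply, Submodule.Quotient.mk_eq_zero]
      exact LinearMap.mem_range_self f x
    rw [h0, map_zero, sub_zero]
  let eS : coinvRho ≃ₗ[ℤ] S := LinearEquiv.ofInjective f hinj
  have hfinS : Module.finrank ℤ S = 16 := by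
    rw [← LinearEquiv.finrank_eq eS]
    exact St17.finrank_coinv
  have hfinN : Module.finrank ℤ (Fin 22 → ℤ) = 22 := by
    rw [Module.finrank_pi]
    simp
  have hq := Submodule.finrank_quotient_add_finrank S
  have hfinQ : Module.finrank ℤ ((Fin 22 → ℤ) ⧸ S) = 6 := by omega
  have hcard : Fintype.card (Module.Free.ChooseBasisIndex ℤ ((Fin 22 → ℤ) ⧸ S)) = 6 := by
    rw [← Module.finrank_eq_card_chooseBasisIndex]
    exact hfinQ
  let bQ : Module.Basis (Fin 6) ℤ ((Fin 22 → ℤ) ⧸ S) :=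
    (Module.Free.chooseBasis ℤ ((Fin 22 → ℤ) ⧸ S)).reindex (Fintype.equivFinOfCardEq hcard)
  let π : (Fin 22 → ℤ) →ₗ[ℤ] (coinvRho →ₗ[ℤ] ℤ) :=
    (LinearMap.mk₂ ℤ (fun (x : coinvRho) (n : Fin 22 → ℤ) => bilin H (f x) n)
      (fun x y n => by simp [bilin, _root_.map_add, add_dotProduct])
      (fun c x n => by
        show bilin H (f (c • x)) n = c • bilin H (f x) n
        rw [bilin, bilin, LinearMap.map_smul, smul_dotProduct])
      (fun x n1 n2 => by simp [bilin, mulVec_add, dotProduct_add])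
      (fun c x n => by
        show bilin H (f x) (c • n) = c • bilin H (f x) n
        rw [bilin, bilin, Matrix.mulVec_smul, dotProduct_smul])).flip
  have hπ_apply : ∀ (n : Fin 22 → ℤ) (x : coinvRho), π n x = bilin H (f x) n := fun n x => rfl
  let ψ : (Fin 22 → ℤ) →ₗ[ℤ] DiscRho := (LinearMap.range coinvRhoForm).mkQ.comp π
  have hψr : ∀ ξ : coinvRho →ₗ[ℤ] ℤ, ∃ n, π n = ξ := by
    intro ξ
    let ξ' : (Fin 22 → ℤ) →ₗ[ℤ] ℤ := (ξ.comp (eS.symm : S →ₗ[ℤ] coinvRho)).comp gmap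
    have hres : ∀ x : coinvRho, ξ' (f x) = ξ x := by
      intro x
      show ξ (eS.symm (gmap (f x))) = ξ x
      congr 1
      rw [LinearEquiv.symm_apply_eq]
      apply Subtype.ext
      rw [hg_f x]
      exact (LinearEquiv.ofInjective_apply f (h := hinj) x).symm
    haveI := Matrix.invertibleOfIsUnitDet H hunim
    have hw : ∀ n : Fin 22 → ℤ, ξ' n = n ⬝ᵥ (fun j => ξ' (Pi.single j 1)) := by
      intro n
      rw [LinearMap.pi_apply_eq_sum_univ ξ' n]
      simp only [dotProduct, smul_eq_mul]
      refine Finset.sum_congr rfl fun i _ => ?_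
      have hsingle : (fun j => if i = j then (1 : ℤ) else 0) = Pi.single i 1 := by
        funext j
        rw [Pi.single_apply]
        by_cases h : i = j
        · simp [h]
        · simp [h, Ne.symm h]
      rw [hsingle]
    refine ⟨(⅟H).mulVec (fun j => ξ' (Pi.single j 1)), ?_⟩
    refine LinearMap.ext fun x => ?_
    rw [hπ_apply]
    show bilin H (f x) _ = ξ x
    rw [bilin, Matrix.mulVec_mulVec, mul_invOf_self, Matrix.one_mulVec, ← hw, hres]
  have hker : S ≤ LinearMap.ker ψ := by
    rintro n ⟨y, rfl⟩
    rw [LinearMap.mem_ker]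
    show (LinearMap.range coinvRhoForm).mkQ (π (f y)) = 0
    have hπy : π (f y) = coinvRhoForm y := by
      refine LinearMap.ext fun x => ?_
      rw [hπ_apply]
      show bilin H (f x) (f y) = bT (y : Fin 3 → Fin 8 → ℤ) (x : Fin 3 → Fin 8 → ℤ)
      rw [hform x y, St17.bT_comm]
    rw [hπy, Submodule.mkQ_apply, Submodule.Quotient.mk_eq_zero]
    exact LinearMap.mem_range_self _ y
  let ψbar : ((Fin 22 → ℤ) ⧸ S) →ₗ[ℤ] DiscRho := S.liftQ ψ hker
  have hψbar_surj : Function.Surjective ψbar := by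
    intro d
    obtain ⟨ξ, rfl⟩ := (LinearMap.range coinvRhoForm).mkQ_surjective d
    obtain ⟨n, hn⟩ := hψr ξ
    refine ⟨S.mkQ n, ?_⟩
    rw [Submodule.mkQ_apply, Submodule.liftQ_apply]
    show (LinearMap.range coinvRhoForm).mkQ (π n) = _
    rw [hn]
  let v : Fin 6 → DiscRho := fun i => ψbar (bQ i)
  have hv : Submodule.span ℤ (Set.range v) = ⊤ := by
    have hvr : Set.range v = ψbar '' Set.range bQ := by
      rw [← Set.range_comp]
      rfl
    rw [hvr, Submodule.span_image, bQ.span_eq, Submodule.map_top,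
      LinearMap.range_eq_top.mpr hψbar_surj]
  have hcl := St17.gen_from_span v hv
  have hle := St17.lower_bound 6 (fun i => St17.discEquiv.symm (v i))
    (St17.closure_top_map St17.discEquiv.symm v hcl)
  omega
end
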